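/- Let P = (S, 𝓛) be a thick nondegenerate polar space of rank at least 3 and let W be a proper subspace of P that is contained in some hyperplane of P but is not itself a hyperplane. If K₁, K₂, K₃ are pairwise nonparallel affine lines of D(P, W) such that [K₁] ≡ [K₂], [K₂] ≡ [K₃], and [K₃] ≡ [K₁], then the points K₁^∞, K₂^∞, K₃^∞ lie on a common line of P. -/
import Mathlib


namespace PolarComp

variable {S : Type*}

/-- A partial linear space: every line has at least two points, and two
distinct lines share at most one point. -/
def IsPLS (𝓛 : Set (Set S)) : Prop :=
  (∀ l ∈ 𝓛, ∃ a b : S, a ≠ b ∧ a ∈ l ∧ b ∈ l) ∧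
  (∀ l ∈ 𝓛, ∀ m ∈ 𝓛, l ≠ m → ∀ a b : S, a ∈ l ∩ m → b ∈ l ∩ m → a = b)

/-- Thick: every line has at least three points. -/
def Thick (𝓛 : Set (Set S)) : Prop :=
  ∀ l ∈ 𝓛, ∃ a b c : S, a ≠ b ∧ a ≠ c ∧ b ≠ c ∧ a ∈ l ∧ b ∈ l ∧ c ∈ l

/-- Two points are collinear iff they lie on a common line (every point is
collinear with itself). -/
def Collin (𝓛 : Set (Set S)) (a b : S) : Prop :=
  a = b ∨ ∃ l ∈ 𝓛, a ∈ l ∧ b ∈ l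

/-- Nondegenerate: no point is collinear with all other points. -/
def Nondegenerate (𝓛 : Set (Set S)) : Prop :=
  ∀ a : S, ∃ b : S, ¬ Collin 𝓛 a b

/-- The one-or-all axiom: a point off a line is collinear with exactly one or
with all points of the line. -/
def OneOrAll (𝓛 : Set (Set S)) : Prop :=
  ∀ l ∈ 𝓛, ∀ a : S, a ∉ l →
    (∃! b, b ∈ l ∧ Collin 𝓛 a b) ∨ (∀ b ∈ l, Collin 𝓛 a b)

/-- A polar space is a partial linear space satisfying the one-or-all axiom. -/
def IsPolarSpace (𝓛 : Set (Set S)) : Prop := IsPLS 𝓛 ∧ OneOrAll 𝓛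

/-- A subspace: contains every line meeting it in at least two points. -/
def IsSubspace (𝓛 : Set (Set S)) (X : Set S) : Prop :=
  ∀ l ∈ 𝓛, (∃ a ∈ l ∩ X, ∃ b ∈ l ∩ X, a ≠ b) → l ⊆ X

/-- A hyperplane: a proper subspace meeting every line. -/
def IsHyperplane (𝓛 : Set (Set S)) (X : Set S) : Prop :=
  IsSubspace 𝓛 X ∧ X ≠ Set.univ ∧ ∀ l ∈ 𝓛, (l ∩ X).Nonempty

/-- A singular set: any two of its points are collinear. -/
def SingularSet (𝓛 : Set (Set S)) (X : Set S) : Prop :=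
  ∀ a ∈ X, ∀ b ∈ X, Collin 𝓛 a b

/-- Rank at least `n`: there is a strictly increasing chain of `n` nonempty
singular subspaces. -/
def RankAtLeast (𝓛 : Set (Set S)) (n : ℕ) : Prop :=
  ∃ X : Fin n → Set S, StrictMono X ∧
    ∀ i, (X i).Nonempty ∧ SingularSet 𝓛 (X i) ∧ IsSubspace 𝓛 (X i)

/-- `perp 𝓛 a` is the set of points collinear with `a`. -/
def perp (𝓛 : Set (Set S)) (a : S) : Set S := {b | Collin 𝓛 a b}

/-- The radical of `X`: `X ∩ X^⊥`. -/
def radSet (𝓛 : Set (Set S)) (X : Set S) : Set S :=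
  X ∩ {a | ∀ b ∈ X, Collin 𝓛 a b}

/-- The lines of the complement `D(P, W)`. -/
def compLines (𝓛 : Set (Set S)) (W : Set S) : Set (Set S) :=
  {K | ∃ k ∈ 𝓛, ¬ k ⊆ W ∧ K = k \ W}

/-- Two proper lines are parallel iff their closures meet in `W`. -/
def Parallel (𝓛 : Set (Set S)) (W : Set S) (K L : Set S) : Prop :=
  ∃ k ∈ 𝓛, ∃ l ∈ 𝓛, ¬ k ⊆ W ∧ ¬ l ⊆ W ∧ K = k \ W ∧ L = l \ W ∧
    (k ∩ l ∩ W).Nonempty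

/-- A proper line is affine iff its closure meets `W`. -/
def IsAffineLine (𝓛 : Set (Set S)) (W : Set S) (K : Set S) : Prop :=
  ∃ k ∈ 𝓛, ¬ k ⊆ W ∧ K = k \ W ∧ (k ∩ W).Nonempty

/-- `AtInfinity 𝓛 W K a` says that `a = K^∞`, i.e. `a` is a point of `K̄ ∩ W`. -/
def AtInfinity (𝓛 : Set (Set S)) (W : Set S) (K : Set S) (a : S) : Prop :=
  ∃ k ∈ 𝓛, ¬ k ⊆ W ∧ K = k \ W ∧ a ∈ k ∩ W

/-- A deep point of `W`: a point of `W` which is `L^∞` for no affine line `L`. -/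
def IsDeepPoint (𝓛 : Set (Set S)) (W : Set S) (a : S) : Prop :=
  a ∈ W ∧ ∀ K : Set S, ¬ AtInfinity 𝓛 W K a

/-- A plane: a minimal singular subspace containing a given line and a given
point not on that line. -/
def IsPlane (𝓛 : Set (Set S)) (X : Set S) : Prop :=
  ∃ l ∈ 𝓛, ∃ a : S, a ∉ l ∧ a ∈ X ∧ l ⊆ X ∧
    SingularSet 𝓛 X ∧ IsSubspace 𝓛 X ∧
    ∀ Y : Set S, SingularSet 𝓛 Y → IsSubspace 𝓛 Y → l ⊆ Y → a ∈ Y → Y ⊆ X → Y = X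

/-- `Π^∞`: the points at infinity of a plane of the complement with closure `Pl`. -/
def planeInfinity (𝓛 : Set (Set S)) (W : Set S) (Pl : Set S) : Set S :=
  {a | ∃ M : Set S, IsAffineLine 𝓛 W M ∧ M ⊆ Pl \ W ∧ AtInfinity 𝓛 W M a}

/-- A deep line: an improper line `L ⊆ W` which is `Π^∞` for no plane of the
complement. -/
def IsDeepLine (𝓛 : Set (Set S)) (W : Set S) (L : Set S) : Prop :=
  L ∈ 𝓛 ∧ L ⊆ W ∧
    ∀ Pl : Set S, IsPlane 𝓛 Pl → ¬ Pl ⊆ W → planeInfinity 𝓛 W Pl ≠ L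

/-- The relation `∥*` on proper lines of the complement. -/
def ParStar (𝓛 : Set (Set S)) (W : Set S) (K₁ K₂ : Set S) : Prop :=
  K₁ ∈ compLines 𝓛 W ∧ K₂ ∈ compLines 𝓛 W ∧ K₁ ∩ K₂ = ∅ ∧
    ∃ L₁ ∈ compLines 𝓛 W, ∃ L₂ ∈ compLines 𝓛 W, L₁ ≠ L₂ ∧
      (L₁ ∩ L₂).Nonempty ∧ (L₁ ∩ K₁).Nonempty ∧ (L₁ ∩ K₂).Nonempty ∧
      (L₂ ∩ K₁).Nonempty ∧ (L₂ ∩ K₂).Nonempty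

/-- `∥ᵗ`: the transitive closure of `∥*`. -/
def ParT (𝓛 : Set (Set S)) (W : Set S) : Set S → Set S → Prop :=
  Relation.TransGen (ParStar 𝓛 W)

/-- The anti-euclidean relation `~` on affine lines: `K₁ ~ K₂` iff no affine
line through a point of `K₁` is parallel to `K₂`. -/
def Tilde (𝓛 : Set (Set S)) (W : Set S) (K₁ K₂ : Set S) : Prop :=
  ∀ a ∈ K₁, ∀ M : Set S, IsAffineLine 𝓛 W M → a ∈ M → ¬ Parallel 𝓛 W M K₂

/-- `[K₁] ≡ [K₂]`: `M ~ N` and `N ~ M` for all `M ∥ K₁` and `N ∥ K₂`. -/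
def EquivCls (𝓛 : Set (Set S)) (W : Set S) (K₁ K₂ : Set S) : Prop :=
  ∀ M N : Set S, IsAffineLine 𝓛 W M → IsAffineLine 𝓛 W N →
    Parallel 𝓛 W M K₁ → Parallel 𝓛 W N K₂ → Tilde 𝓛 W M N ∧ Tilde 𝓛 W N M

/-- The parallel class of an affine line. -/
def parClass (𝓛 : Set (Set S)) (W : Set S) (L : Set S) : Set (Set S) :=
  {M | IsAffineLine 𝓛 W M ∧ Parallel 𝓛 W M L}

/-- The class of affine lines with point at infinity `w`. -/
def classAt (𝓛 : Set (Set S)) (W : Set S) (w : S) : Set (Set S) :=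
  {L | IsAffineLine 𝓛 W L ∧ AtInfinity 𝓛 W L w}

/-- A witness that the polar space embeds in a projective space `ℙ(F, V)`. -/
structure EmbeddingWitness (𝓛 : Set (Set S)) where
  F : Type
  [iF : DivisionRing F]
  V : Type
  [iV : AddCommGroup V]
  [iM : Module F V]
  f : S → Projectivization F V
  inj : Function.Injective f
  spanning : ∀ T : Submodule F V, (∀ s : S, Projectivization.submodule (f s) ≤ T) → T = ⊤
  lines2dim : ∀ l ∈ 𝓛, ∃ U : Submodule F V, Module.finrank F ↥U = 2 ∧
    f '' l = {p | ∃ v : V, ∃ hv : v ≠ 0, v ∈ U ∧ p = Projectivization.mk F v hv}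

/-- An embeddable polar space. -/
def Embeddable (𝓛 : Set (Set S)) : Prop := Nonempty (EmbeddingWitness 𝓛)



section Helpers

variable {𝓛 : Set (Set S)}

lemma collin_refl (𝓛 : Set (Set S)) (a : S) : Collin 𝓛 a a := Or.inl rfl

lemma collin_symm {a b : S} (h : Collin 𝓛 a b) : Collin 𝓛 b a := by
  rcases h with h | ⟨l, hl, ha, hb⟩
  · exact Or.inl h.symm
  · exact Or.inr ⟨l, hl, hb, ha⟩

lemma collin_of_mem {l : Set S} {a b : S} (hl : l ∈ 𝓛) (ha : a ∈ l) (hb : b ∈ l) :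
    Collin 𝓛 a b := Or.inr ⟨l, hl, ha, hb⟩

lemma line_of_collin {a b : S} (h : Collin 𝓛 a b) (hne : a ≠ b) :
    ∃ l ∈ 𝓛, a ∈ l ∧ b ∈ l := by
  rcases h with h | ⟨l, hl, ha, hb⟩
  · exact absurd h hne
  · exact ⟨l, hl, ha, hb⟩

lemma line_unique (hpls : IsPLS 𝓛) {l m : Set S} (hl : l ∈ 𝓛) (hm : m ∈ 𝓛) {x y : S}
    (hxy : x ≠ y) (hxl : x ∈ l) (hyl : y ∈ l) (hxm : x ∈ m) (hym : y ∈ m) : l = m := by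
  by_contra hlm
  exact hxy (hpls.2 l hl m hm hlm x y ⟨hxl, hxm⟩ ⟨hyl, hym⟩)

lemma all_of_two (hoa : OneOrAll 𝓛) {l : Set S} {a x y : S} (hl : l ∈ 𝓛)
    (hx : x ∈ l) (hy : y ∈ l) (hxy : x ≠ y) (hax : Collin 𝓛 a x) (hay : Collin 𝓛 a y) :
    ∀ w ∈ l, Collin 𝓛 a w := by
  intro w hw
  by_cases hal : a ∈ l
  · exact collin_of_mem hl hal hw
  · rcases hoa l hl a hal with ⟨c, _, hun⟩ | hall
    · exact absurd ((hun x ⟨hx, hax⟩).trans (hun y ⟨hy, hay⟩).symm) hxy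
    · exact hall w hw

lemma trace_unique (hoa : OneOrAll 𝓛) {l : Set S} {a x y : S} (hl : l ∈ 𝓛)
    (hx : x ∈ l) (hax : Collin 𝓛 a x) (hy : y ∈ l) (hay : ¬ Collin 𝓛 a y) :
    ∀ w ∈ l, Collin 𝓛 a w → w = x := by
  intro w hw hw'
  have hal : a ∉ l := fun h => hay (collin_of_mem hl h hy)
  rcases hoa l hl a hal with ⟨c, _, hun⟩ | hall
  · exact (hun w ⟨hw, hw'⟩).trans (hun x ⟨hx, hax⟩).symm
  · exact absurd (hall y hy) hay

lemma trace_exists (hoa : OneOrAll 𝓛) {l : Set S} {a y : S} (hl : l ∈ 𝓛)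
    (hy : y ∈ l) (hay : ¬ Collin 𝓛 a y) :
    ∃ x ∈ l, Collin 𝓛 a x ∧ x ≠ y := by
  have hal : a ∉ l := fun h => hay (collin_of_mem hl h hy)
  rcases hoa l hl a hal with ⟨c, ⟨hcl, hcc⟩, _⟩ | hall
  · exact ⟨c, hcl, hcc, fun h => hay (h ▸ hcc)⟩
  · exact absurd (hall y hy) hay

/-- In a nondegenerate polar space, `p^⊥ ⊆ q^⊥` implies `p = q`. -/
lemma perp_not_subset (hpls : IsPLS 𝓛) (hoa : OneOrAll 𝓛) (hnd : Nondegenerate 𝓛)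
    {p q : S} (hne : p ≠ q) (h : ∀ u, Collin 𝓛 u p → Collin 𝓛 u q) : False := by
  have hpq : Collin 𝓛 p q := h p (collin_refl 𝓛 p)
  obtain ⟨L, hL, hpL, hqL⟩ := line_of_collin hpq hne
  have hall : ∀ u, Collin 𝓛 u p → ∀ w ∈ L, Collin 𝓛 u w := by
    intro u hup w hw
    exact all_of_two hoa hL hpL hqL hne hup (h u hup) w hw
  obtain ⟨z, hzq⟩ := hnd q
  have hzq' : ¬ Collin 𝓛 z q := fun hc => hzq (collin_symm hc)
  have hzp : ¬ Collin 𝓛 z p := fun hc => hzq' (h z hc)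
  obtain ⟨r, hrL, hzr, hrp⟩ := trace_exists hoa hL hpL hzp
  have hzrne : z ≠ r := fun h' => hzp (by rw [h']; exact collin_of_mem hL hrL hpL)
  obtain ⟨N, hN, hzN, hrN⟩ := line_of_collin hzr hzrne
  obtain ⟨z', hz'r⟩ := hnd r
  have hz'r' : ¬ Collin 𝓛 z' r := fun hc => hz'r (collin_symm hc)
  obtain ⟨y₀, hy₀N, hz'y₀, hy₀r⟩ := trace_exists hoa hN hrN hz'r'
  have hy₀q : ¬ Collin 𝓛 q y₀ := by
    intro hc
    have : ∀ w ∈ N, Collin 𝓛 q w :=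
      all_of_two hoa hN hy₀N hrN hy₀r hc (collin_of_mem hL hqL hrL)
    exact hzq' (collin_symm (this z hzN))
  have hy₀p : ¬ Collin 𝓛 y₀ p := fun hc => hy₀q (collin_symm (h y₀ hc))
  have hz'N : z' ∉ N := fun hm => hz'r (collin_of_mem hN hrN hm)
  have hy₀z' : y₀ ≠ z' := fun h' => hz'N (h' ▸ hy₀N)
  obtain ⟨M, hM, hy₀M, hz'M⟩ := line_of_collin (collin_symm hz'y₀) hy₀z'
  have hpy₀ : ¬ Collin 𝓛 p y₀ := fun hc => hy₀p (collin_symm hc)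
  obtain ⟨π, hπM, hpπ, hπy₀⟩ := trace_exists hoa hM hy₀M hpy₀
  have hπr : Collin 𝓛 π r := hall π (collin_symm hpπ) r hrL
  have hrall : ∀ w ∈ M, Collin 𝓛 r w :=
    all_of_two hoa hM hy₀M hπM (Ne.symm hπy₀) (collin_of_mem hN hrN hy₀N) (collin_symm hπr)
  exact hz'r (hrall z' hz'M)

/-- The union of the perps of two distinct collinear points is contained in no
proper subspace. -/
lemma perp_union_proper (hpls : IsPLS 𝓛) (hoa : OneOrAll 𝓛) (hnd : Nondegenerate 𝓛)
    {Y : Set S} (hY : IsSubspace 𝓛 Y) (hYne : Y ≠ Set.univ)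
    {p q : S} (hpq : p ≠ q) (hc : Collin 𝓛 p q)
    (hp : ∀ u, Collin 𝓛 u p → u ∈ Y) (hq : ∀ u, Collin 𝓛 u q → u ∈ Y) : False := by
  obtain ⟨z, hzY⟩ := (Set.ne_univ_iff_exists_notMem Y).1 hYne
  have hzp : ¬ Collin 𝓛 z p := fun h => hzY (hp z h)
  have hzq : ¬ Collin 𝓛 z q := fun h => hzY (hq z h)
  obtain ⟨L, hL, hpL, hqL⟩ := line_of_collin hc hpq
  obtain ⟨r, hrL, hzr, _⟩ := trace_exists hoa hL hpL hzp
  have hrY : r ∈ Y := hp r (collin_of_mem hL hrL hpL)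
  have hzr_ne : z ≠ r := fun h => hzY (h ▸ hrY)
  obtain ⟨N, hN, hzN, hrN⟩ := line_of_collin hzr hzr_ne
  have hNY : ∀ w ∈ N, w ∈ Y → w = r := by
    intro w hwN hwY
    by_contra hwr
    exact hzY (hY N hN ⟨w, ⟨hwN, hwY⟩, r, ⟨hrN, hrY⟩, hwr⟩ hzN)
  obtain ⟨z', hz'r⟩ := hnd r
  have hz'r' : ¬ Collin 𝓛 z' r := fun h => hz'r (collin_symm h)
  have hz'N : z' ∉ N := fun hm => hz'r (collin_of_mem hN hrN hm)
  obtain ⟨y₀, hy₀N, hz'y₀, hy₀r⟩ := trace_exists hoa hN hrN hz'r'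
  have hy₀Y : y₀ ∉ Y := fun h => hy₀r (hNY y₀ hy₀N h)
  have hy₀p : ¬ Collin 𝓛 p y₀ := fun h => hy₀Y (hp y₀ (collin_symm h))
  have hy₀q : ¬ Collin 𝓛 q y₀ := fun h => hy₀Y (hq y₀ (collin_symm h))
  have hy₀z' : y₀ ≠ z' := fun h => hz'N (h ▸ hy₀N)
  obtain ⟨M, hM, hy₀M, hz'M⟩ := line_of_collin (collin_symm hz'y₀) hy₀z'
  obtain ⟨π₁, hπ₁M, hpπ₁, hπ₁y₀⟩ := trace_exists hoa hM hy₀M hy₀p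
  obtain ⟨π₂, hπ₂M, hqπ₂, hπ₂y₀⟩ := trace_exists hoa hM hy₀M hy₀q
  have hπ₁Y : π₁ ∈ Y := hp π₁ (collin_symm hpπ₁)
  have hπ₂Y : π₂ ∈ Y := hq π₂ (collin_symm hqπ₂)
  by_cases hππ : π₁ = π₂
  · have hπ₁q : Collin 𝓛 π₁ q := by rw [hππ]; exact collin_symm hqπ₂
    have hπr : Collin 𝓛 π₁ r :=
      all_of_two hoa hL hpL hqL hpq (collin_symm hpπ₁) hπ₁q r hrL
    have hrall : ∀ w ∈ M, Collin 𝓛 r w :=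
      all_of_two hoa hM hy₀M hπ₁M (Ne.symm hπ₁y₀) (collin_of_mem hN hrN hy₀N)
        (collin_symm hπr)
    exact hz'r (hrall z' hz'M)
  · exact hy₀Y (hY M hM ⟨π₁, ⟨hπ₁M, hπ₁Y⟩, π₂, ⟨hπ₂M, hπ₂Y⟩, hππ⟩ hy₀M)

/-- Triangle elimination, asymmetric form: there is no point off `H`
collinear with a vertex of a non-degenerate triangle whose pairwise perps
lie in the hyperplane `H`. -/
lemma caseA (hpls : IsPLS 𝓛) (hoa : OneOrAll 𝓛) (hnd : Nondegenerate 𝓛)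
    {H : Set S} (hH : IsSubspace 𝓛 H) (hHl : ∀ l ∈ 𝓛, (l ∩ H).Nonempty)
    {p q₁ q₂ : S}
    (hpq₁ : Collin 𝓛 p q₁) (hpq₂ : Collin 𝓛 p q₂) (hq₁₂ : Collin 𝓛 q₁ q₂)
    (hne₃ : q₁ ≠ q₂)
    (hperp₁ : ∀ u, Collin 𝓛 u p → Collin 𝓛 u q₁ → u ∈ H)
    (hperp₂ : ∀ u, Collin 𝓛 u p → Collin 𝓛 u q₂ → u ∈ H)
    (hperp₃ : ∀ u, Collin 𝓛 u q₁ → Collin 𝓛 u q₂ → u ∈ H)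
    (hnc : ∀ m ∈ 𝓛, ¬ (p ∈ m ∧ q₁ ∈ m ∧ q₂ ∈ m))
    {b : S} (hbH : b ∉ H) (hbp : Collin 𝓛 b p) : False := by
  have hpH : p ∈ H := hperp₁ p (collin_refl 𝓛 p) hpq₁
  have hbq₁ : ¬ Collin 𝓛 b q₁ := fun h => hbH (hperp₁ b hbp h)
  have hbq₂ : ¬ Collin 𝓛 b q₂ := fun h => hbH (hperp₂ b hbp h)
  obtain ⟨lo, hlo, hq₁lo, hq₂lo⟩ := line_of_collin hq₁₂ hne₃
  have hplo : p ∉ lo := fun h => hnc lo hlo ⟨h, hq₁lo, hq₂lo⟩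
  have hpallo : ∀ w ∈ lo, Collin 𝓛 p w := all_of_two hoa hlo hq₁lo hq₂lo hne₃ hpq₁ hpq₂
  obtain ⟨ps, hpslo, hbps, hpsq₁⟩ := trace_exists hoa hlo hq₁lo hbq₁
  have hpsH : ps ∈ H :=
    hperp₃ ps (collin_of_mem hlo hpslo hq₁lo) (collin_of_mem hlo hpslo hq₂lo)
  have hpps : Collin 𝓛 p ps := hpallo ps hpslo
  have hppsne : p ≠ ps := fun h => hplo (h ▸ hpslo)
  have hbps_ne : b ≠ ps := fun h => hbH (h ▸ hpsH)
  obtain ⟨N, hN, hbN, hpsN⟩ := line_of_collin hbps hbps_ne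
  have hNH : ∀ w ∈ N, w ∈ H → w = ps := by
    intro w hwN hwH
    by_contra hwps
    exact hbH (hH N hN ⟨w, ⟨hwN, hwH⟩, ps, ⟨hpsN, hpsH⟩, hwps⟩ hbN)
  have hpallN : ∀ w ∈ N, Collin 𝓛 p w :=
    all_of_two hoa hN hbN hpsN hbps_ne (collin_symm hbp) hpps
  by_cases hLB : ∀ u, Collin 𝓛 u p → Collin 𝓛 u ps
  · exact perp_not_subset hpls hoa hnd hppsne hLB
  push_neg at hLB
  obtain ⟨z', hz'p, hz'ps⟩ := hLB
  have hz'N : z' ∉ N := fun h => hz'ps (collin_of_mem hN h hpsN)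
  obtain ⟨y₀, hy₀N, hz'y₀, hy₀ps⟩ := trace_exists hoa hN hpsN hz'ps
  have hy₀H : y₀ ∉ H := fun h => hy₀ps (hNH y₀ hy₀N h)
  have hpy₀ : Collin 𝓛 p y₀ := hpallN y₀ hy₀N
  have hy₀z' : y₀ ≠ z' := fun h => hz'N (h ▸ hy₀N)
  obtain ⟨M, hM, hy₀M, hz'M⟩ := line_of_collin (collin_symm hz'y₀) hy₀z'
  have hpallM : ∀ w ∈ M, Collin 𝓛 p w := by
    by_cases hpM : p ∈ M
    · exact fun w hw => collin_of_mem hM hpM hw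
    · exact all_of_two hoa hM hy₀M hz'M hy₀z' hpy₀ (collin_symm hz'p)
  obtain ⟨u, huM, huH⟩ := hHl M hM
  have huy₀ : u ≠ y₀ := fun h => hy₀H (h ▸ huH)
  by_cases hq₁u : Collin 𝓛 q₁ u
  · by_cases hq₂u : Collin 𝓛 q₂ u
    · -- u is collinear with both q₁ and q₂, hence with ps; contradiction via z'.
      have hups : Collin 𝓛 u ps := by
        by_cases hulo : u ∈ lo
        · exact collin_of_mem hlo hulo hpslo
        · exact all_of_two hoa hlo hq₁lo hq₂lo hne₃ (collin_symm hq₁u)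
            (collin_symm hq₂u) ps hpslo
      have hpsall : ∀ w ∈ M, Collin 𝓛 ps w :=
        all_of_two hoa hM huM hy₀M huy₀ (collin_symm hups)
          (collin_of_mem hN hpsN hy₀N)
      exact hz'ps (collin_symm (hpsall z' hz'M))
    · by_cases hpM : p ∈ M
      · have hpu_ne : p ≠ u := fun h => hq₂u (collin_symm (h ▸ hpq₂))
        exact hy₀H (hH M hM ⟨p, ⟨hpM, hpH⟩, u, ⟨huM, huH⟩, hpu_ne⟩ hy₀M)
      · obtain ⟨v, hvM, hq₂v, hvu⟩ := trace_exists hoa hM huM hq₂u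
        have hvH : v ∈ H := hperp₂ v (collin_symm (hpallM v hvM)) (collin_symm hq₂v)
        exact hy₀H (hH M hM ⟨v, ⟨hvM, hvH⟩, u, ⟨huM, huH⟩, hvu⟩ hy₀M)
  · by_cases hpM : p ∈ M
    · have hpu_ne : p ≠ u := fun h => hq₁u (collin_symm (h ▸ hpq₁))
      exact hy₀H (hH M hM ⟨p, ⟨hpM, hpH⟩, u, ⟨huM, huH⟩, hpu_ne⟩ hy₀M)
    · obtain ⟨v, hvM, hq₁v, hvu⟩ := trace_exists hoa hM huM hq₁u
      have hvH : v ∈ H := hperp₁ v (collin_symm (hpallM v hvM)) (collin_symm hq₁v)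
      exact hy₀H (hH M hM ⟨v, ⟨hvM, hvH⟩, u, ⟨huM, huH⟩, hvu⟩ hy₀M)

/-- There is no triangle (three pairwise collinear points on no common line)
whose pairwise perps are contained in a hyperplane. -/
lemma triangle_kill (hpls : IsPLS 𝓛) (hoa : OneOrAll 𝓛) (hnd : Nondegenerate 𝓛)
    {H : Set S} (hHsub : IsSubspace 𝓛 H) (hHne : H ≠ Set.univ)
    (hHl : ∀ l ∈ 𝓛, (l ∩ H).Nonempty) {a₁ a₂ a₃ : S}
    (h12 : Collin 𝓛 a₁ a₂) (h23 : Collin 𝓛 a₂ a₃) (h31 : Collin 𝓛 a₃ a₁)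
    (ne12 : a₁ ≠ a₂) (ne23 : a₂ ≠ a₃) (ne31 : a₃ ≠ a₁)
    (hp12 : ∀ u, Collin 𝓛 u a₁ → Collin 𝓛 u a₂ → u ∈ H)
    (hp23 : ∀ u, Collin 𝓛 u a₂ → Collin 𝓛 u a₃ → u ∈ H)
    (hp31 : ∀ u, Collin 𝓛 u a₃ → Collin 𝓛 u a₁ → u ∈ H)
    (hnc : ∀ m ∈ 𝓛, ¬ (a₁ ∈ m ∧ a₂ ∈ m ∧ a₃ ∈ m)) : False := by
  by_cases hex : ∃ b, b ∉ H ∧ (Collin 𝓛 b a₁ ∨ Collin 𝓛 b a₂ ∨ Collin 𝓛 b a₃)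
  · obtain ⟨b, hbH, hb⟩ := hex
    rcases hb with hb1 | hb2 | hb3
    · exact caseA hpls hoa hnd hHsub hHl h12 (collin_symm h31) h23 ne23
        hp12 (fun u h1 h3 => hp31 u h3 h1) hp23 hnc hbH hb1
    · exact caseA hpls hoa hnd hHsub hHl (collin_symm h12) h23 (collin_symm h31)
        (Ne.symm ne31) (fun u h2 h1 => hp12 u h1 h2) hp23
        (fun u h1 h3 => hp31 u h3 h1)
        (fun m hm h => hnc m hm ⟨h.2.1, h.1, h.2.2⟩) hbH hb2
    · exact caseA hpls hoa hnd hHsub hHl h31 (collin_symm h23) h12 ne12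
        hp31 (fun u h3 h2 => hp23 u h2 h3) hp12
        (fun m hm h => hnc m hm ⟨h.2.1, h.2.2, h.1⟩) hbH hb3
  · push_neg at hex
    have hp : ∀ u, Collin 𝓛 u a₁ → u ∈ H := by
      intro u hu
      by_contra h
      exact (hex u h).1 hu
    have hq : ∀ u, Collin 𝓛 u a₂ → u ∈ H := by
      intro u hu
      by_contra h
      exact (hex u h).2.1 hu
    exact perp_union_proper hpls hoa hnd hHsub hHne ne12 h12 hp hq

/-- From `[K_a] ≡ [K_b]` for nonparallel affine lines: no point outside `W`
is collinear with both points at infinity. -/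
lemma star_of_equiv {W : Set S} {Ka Kb : Set S} (hKb : IsAffineLine 𝓛 W Kb)
    {ka kb : Set S} (hka : ka ∈ 𝓛) (hkb : kb ∈ 𝓛) (hkaW : ¬ ka ⊆ W) (hkbW : ¬ kb ⊆ W)
    (hKa : Ka = ka \ W) (hKbe : Kb = kb \ W) {aa ab : S}
    (haa : aa ∈ ka ∩ W) (hab : ab ∈ kb ∩ W) (he : EquivCls 𝓛 W Ka Kb)
    {b : S} (hbW : b ∉ W) (hba : Collin 𝓛 b aa) (hbb : Collin 𝓛 b ab) : False := by
  have hbaa : b ≠ aa := fun h => hbW (h ▸ haa.2)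
  have hbab : b ≠ ab := fun h => hbW (h ▸ hab.2)
  obtain ⟨n, hn, hbn, han⟩ := line_of_collin hba hbaa
  obtain ⟨n', hn', hbn', han'⟩ := line_of_collin hbb hbab
  have hnW : ¬ n ⊆ W := fun h => hbW (h hbn)
  have hn'W : ¬ n' ⊆ W := fun h => hbW (h hbn')
  have hM : IsAffineLine 𝓛 W (n \ W) := ⟨n, hn, hnW, rfl, ⟨aa, han, haa.2⟩⟩
  have hM'' : IsAffineLine 𝓛 W (n' \ W) := ⟨n', hn', hn'W, rfl, ⟨ab, han', hab.2⟩⟩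
  have hparMKa : Parallel 𝓛 W (n \ W) Ka :=
    ⟨n, hn, ka, hka, hnW, hkaW, rfl, hKa, ⟨aa, ⟨⟨han, haa.1⟩, haa.2⟩⟩⟩
  have hparKb : Parallel 𝓛 W Kb Kb :=
    ⟨kb, hkb, kb, hkb, hkbW, hkbW, hKbe, hKbe, ⟨ab, ⟨⟨hab.1, hab.1⟩, hab.2⟩⟩⟩
  exact (he (n \ W) Kb hM hKb hparMKa hparKb).1 b ⟨hbn, hbW⟩ (n' \ W) hM'' ⟨hbn', hbW⟩
    ⟨n', hn', kb, hkb, hn'W, hkbW, rfl, hKbe, ⟨ab, ⟨⟨han', hab.1⟩, hab.2⟩⟩⟩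

/-- Two points of `W` at infinity of affine lines whose common perp lies in
`W` are collinear. -/
lemma collin_pair (hpls : IsPLS 𝓛) (hoa : OneOrAll 𝓛) {W : Set S} (hW : IsSubspace 𝓛 W)
    {k : Set S} (hk : k ∈ 𝓛) (hkW : ¬ k ⊆ W) {a a' : S} (ha : a ∈ k ∩ W) (ha' : a' ∈ W)
    (hne : a ≠ a') (hstar : ∀ b, b ∉ W → Collin 𝓛 b a → Collin 𝓛 b a' → False) :
    Collin 𝓛 a a' := by
  have hsingle : ∀ c ∈ k, c ∈ W → c = a := by
    intro c hck hcW
    by_contra hca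
    exact hkW (hW k hk ⟨c, ⟨hck, hcW⟩, a, ⟨ha.1, ha.2⟩, hca⟩)
  have ha'k : a' ∉ k := fun h => hne (hsingle a' h ha').symm
  rcases hoa k hk a' ha'k with ⟨c, ⟨hck, hcc⟩, _⟩ | hall
  · by_cases hcW : c ∈ W
    · have hca : c = a := hsingle c hck hcW
      rw [hca] at hcc
      exact collin_symm hcc
    · exact (hstar c hcW (collin_of_mem hk hck ha.1) (collin_symm hcc)).elim
  · obtain ⟨x, y, hxy, hx, hy⟩ := hpls.1 k hk
    have hex : ∃ x ∈ k, x ∉ W := by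
      by_cases hxW : x ∈ W
      · exact ⟨y, hy, fun hyW => hxy ((hsingle x hx hxW).trans (hsingle y hy hyW).symm)⟩
      · exact ⟨x, hx, hxW⟩
    obtain ⟨x₀, hx₀k, hx₀W⟩ := hex
    exact (hstar x₀ hx₀W (collin_of_mem hk hx₀k ha.1) (collin_symm (hall x₀ hx₀k))).elim

end Helpers

theorem statement_13 (𝓛 : Set (Set S)) (hpolar : IsPolarSpace 𝓛) (hthick : Thick 𝓛)
    (hnd : Nondegenerate 𝓛) (hrank : RankAtLeast 𝓛 3)
    (W : Set S) (hsub : IsSubspace 𝓛 W) (hproper : W ≠ Set.univ)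
    (hhyp : ∃ H : Set S, IsHyperplane 𝓛 H ∧ W ⊆ H)
    (hnothyp : ¬ IsHyperplane 𝓛 W)
    (K₁ K₂ K₃ : Set S)
    (h₁ : IsAffineLine 𝓛 W K₁) (h₂ : IsAffineLine 𝓛 W K₂) (h₃ : IsAffineLine 𝓛 W K₃)
    (hnp₁₂ : ¬ Parallel 𝓛 W K₁ K₂) (hnp₂₃ : ¬ Parallel 𝓛 W K₂ K₃)
    (hnp₃₁ : ¬ Parallel 𝓛 W K₃ K₁)
    (he₁₂ : EquivCls 𝓛 W K₁ K₂) (he₂₃ : EquivCls 𝓛 W K₂ K₃)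
    (he₃₁ : EquivCls 𝓛 W K₃ K₁) :
    ∀ a₁ a₂ a₃ : S, AtInfinity 𝓛 W K₁ a₁ → AtInfinity 𝓛 W K₂ a₂ →
      AtInfinity 𝓛 W K₃ a₃ → ∃ l ∈ 𝓛, a₁ ∈ l ∧ a₂ ∈ l ∧ a₃ ∈ l := by
  intro a₁ a₂ a₃ hi₁ hi₂ hi₃
  obtain ⟨hpls, hoa⟩ := hpolar
  obtain ⟨H, ⟨hHsub, hHne, hHl⟩, hWH⟩ := hhyp
  obtain ⟨k₁, hk₁L, hk₁W, hK₁, ha₁⟩ := hi₁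
  obtain ⟨k₂, hk₂L, hk₂W, hK₂, ha₂⟩ := hi₂
  obtain ⟨k₃, hk₃L, hk₃W, hK₃, ha₃⟩ := hi₃
  have hne12 : a₁ ≠ a₂ := by
    intro h
    exact hnp₁₂ ⟨k₁, hk₁L, k₂, hk₂L, hk₁W, hk₂W, hK₁, hK₂,
      ⟨a₁, ⟨⟨ha₁.1, by rw [h]; exact ha₂.1⟩, ha₁.2⟩⟩⟩
  have hne23 : a₂ ≠ a₃ := by
    intro h
    exact hnp₂₃ ⟨k₂, hk₂L, k₃, hk₃L, hk₂W, hk₃W, hK₂, hK₃,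
      ⟨a₂, ⟨⟨ha₂.1, by rw [h]; exact ha₃.1⟩, ha₂.2⟩⟩⟩
  have hne31 : a₃ ≠ a₁ := by
    intro h
    exact hnp₃₁ ⟨k₃, hk₃L, k₁, hk₁L, hk₃W, hk₁W, hK₃, hK₁,
      ⟨a₃, ⟨⟨ha₃.1, by rw [h]; exact ha₁.1⟩, ha₃.2⟩⟩⟩
  have hstar12 : ∀ b, b ∉ W → Collin 𝓛 b a₁ → Collin 𝓛 b a₂ → False :=
    fun b hb hb1 hb2 =>
      star_of_equiv h₂ hk₁L hk₂L hk₁W hk₂W hK₁ hK₂ ha₁ ha₂ he₁₂ hb hb1 hb2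
  have hstar23 : ∀ b, b ∉ W → Collin 𝓛 b a₂ → Collin 𝓛 b a₃ → False :=
    fun b hb hb2 hb3 =>
      star_of_equiv h₃ hk₂L hk₃L hk₂W hk₃W hK₂ hK₃ ha₂ ha₃ he₂₃ hb hb2 hb3
  have hstar31 : ∀ b, b ∉ W → Collin 𝓛 b a₃ → Collin 𝓛 b a₁ → False :=
    fun b hb hb3 hb1 =>
      star_of_equiv h₁ hk₃L hk₁L hk₃W hk₁W hK₃ hK₁ ha₃ ha₁ he₃₁ hb hb3 hb1
  have hc12 : Collin 𝓛 a₁ a₂ :=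
    collin_pair hpls hoa hsub hk₁L hk₁W ha₁ ha₂.2 hne12 hstar12
  have hc23 : Collin 𝓛 a₂ a₃ :=
    collin_pair hpls hoa hsub hk₂L hk₂W ha₂ ha₃.2 hne23 hstar23
  have hc31 : Collin 𝓛 a₃ a₁ :=
    collin_pair hpls hoa hsub hk₃L hk₃W ha₃ ha₁.2 hne31 hstar31
  have hp12 : ∀ u, Collin 𝓛 u a₁ → Collin 𝓛 u a₂ → u ∈ H := by
    intro u h1 h2
    by_cases hu : u ∈ W
    · exact hWH hu
    · exact (hstar12 u hu h1 h2).elim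
  have hp23 : ∀ u, Collin 𝓛 u a₂ → Collin 𝓛 u a₃ → u ∈ H := by
    intro u h1 h2
    by_cases hu : u ∈ W
    · exact hWH hu
    · exact (hstar23 u hu h1 h2).elim
  have hp31 : ∀ u, Collin 𝓛 u a₃ → Collin 𝓛 u a₁ → u ∈ H := by
    intro u h1 h2
    by_cases hu : u ∈ W
    · exact hWH hu
    · exact (hstar31 u hu h1 h2).elim
  obtain ⟨l, hlL, ha₁l, ha₂l⟩ := line_of_collin hc12 hne12
  refine ⟨l, hlL, ha₁l, ha₂l, ?_⟩
  by_contra ha₃l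
  have hnc : ∀ m ∈ 𝓛, ¬ (a₁ ∈ m ∧ a₂ ∈ m ∧ a₃ ∈ m) := by
    intro m hm h
    obtain ⟨h1, h2, h3⟩ := h
    have hlm : l = m := line_unique hpls hlL hm hne12 ha₁l ha₂l h1 h2
    exact ha₃l (by rw [hlm]; exact h3)
  exact triangle_kill hpls hoa hnd hHsub hHne hHl hc12 hc23 hc31 hne12 hne23 hne31
    hp12 hp23 hp31 hnc


end PolarComp
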